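/- Let T_t(x,y) = (4πt)^{-1/2}(exp(−(x−y)²/(4t)) − exp(−(x+y)²/(4t))) on (0,∞) and ν the measure on (0,∞) with density y². Then T_t(x,y)/(xy) ≍ ν(B(x,√t))^{-1} exp(−(x−y)²/(ct)) with two-sided bounds (with possibly different constants c in upper and lower bounds), where ν(B(x,r)) ≍ r(x+r)² for x, r > 0. -/

import Mathlib

open MeasureTheory Real

lemma exp_neg_le_inv' {v : ℝ} (hv : 0 < v) : Real.exp (-v) ≤ v⁻¹ := by
  rw [Real.exp_neg]
  apply inv_anti₀ hv
  linarith [Real.add_one_le_exp v]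

lemma nu_eval (x r : ℝ) (hx : 0 < x) (hr : 0 < r) :
    (∫ y in Set.Ioo (max 0 (x - r)) (x + r), y ^ 2) =
      ((x + r) ^ 3 - (max 0 (x - r)) ^ 3) / 3 := by
  have hmb : max 0 (x - r) ≤ x + r := max_le (by linarith) (by linarith)
  rw [← MeasureTheory.integral_Ioc_eq_integral_Ioo,
    ← intervalIntegral.integral_of_le hmb, integral_pow]
  norm_num

lemma nu_bound (x r : ℝ) (hx : 0 < x) (hr : 0 < r) :
    (3:ℝ)⁻¹ * (r * (x + r) ^ 2) ≤ (∫ y in Set.Ioo (max 0 (x - r)) (x + r), y ^ 2) ∧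
    (∫ y in Set.Ioo (max 0 (x - r)) (x + r), y ^ 2) ≤ 3 * (r * (x + r) ^ 2) := by
  rw [nu_eval x r hx hr]
  set m := max 0 (x - r) with hm
  have hm0 : 0 ≤ m := le_max_left _ _
  have hm1 : x - r ≤ m := le_max_right _ _
  have hm2 : m ≤ x := max_le hx.le (by linarith)
  have h1 : 0 ≤ (x - m) * (x + r) ^ 2 := mul_nonneg (by linarith) (sq_nonneg _)
  have h2 : 0 ≤ ((x + r) - m) * ((x + r) * m) :=
    mul_nonneg (by linarith) (mul_nonneg (by linarith) hm0)
  have h3 : 0 ≤ ((x + r) - m) * m ^ 2 := mul_nonneg (by linarith) (sq_nonneg _)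
  have h4 : 0 ≤ (2 * r - ((x + r) - m)) * ((x + r) ^ 2 + (x + r) * m + m ^ 2) := by
    apply mul_nonneg (by linarith)
    nlinarith [sq_nonneg (x + r), sq_nonneg m, mul_nonneg (by linarith : (0:ℝ) ≤ x + r) hm0]
  constructor
  · nlinarith [h1, h2, h3]
  · nlinarith [h4, mul_nonneg hr.le (sq_nonneg (x + r))]


lemma key_lower (x y t s : ℝ) (hx : 0 < x) (hy : 0 < y) (ht : 0 < t) (hs : 0 < s)
    (hst : s ^ 2 = t) :
    (t + x * y) * Real.exp (-(x - y) ^ 2 / (4 * t)) ≤ 16 * (x + s) ^ 2 := by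
  rcases le_or_gt y (2 * (x + s)) with hc | hc
  · have he : Real.exp (-(x - y) ^ 2 / (4 * t)) ≤ 1 := by
      apply Real.exp_le_one_iff.2
      apply div_nonpos_of_nonpos_of_nonneg (neg_nonpos.2 (sq_nonneg _)) (by linarith)
    calc (t + x * y) * Real.exp (-(x - y) ^ 2 / (4 * t)) ≤ (t + x * y) * 1 := by
          apply mul_le_mul_of_nonneg_left he (by positivity)
      _ ≤ 16 * (x + s) ^ 2 := by nlinarith [sq_nonneg (x - s)]
  · have h1 : Real.exp (-(x - y) ^ 2 / (4 * t)) ≤ Real.exp (-(y ^ 2 / (16 * t))) := by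
      apply Real.exp_le_exp.2
      rw [neg_div, neg_le_neg_iff, div_le_div_iff₀ (by linarith) (by linarith)]
      nlinarith [mul_nonneg ht.le (mul_nonneg (by linarith : (0:ℝ) ≤ y - 2*x)
        (by linarith : (0:ℝ) ≤ 3*y - 2*x))]
    have h2 : Real.exp (-(y ^ 2 / (16 * t))) ≤ 16 * t / y ^ 2 := by
      calc Real.exp (-(y ^ 2 / (16 * t))) ≤ (y ^ 2 / (16 * t))⁻¹ :=
            exp_neg_le_inv' (by positivity)
        _ = 16 * t / y ^ 2 := by rw [inv_div]
    calc (t + x * y) * Real.exp (-(x - y) ^ 2 / (4 * t))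
        ≤ (t + x * y) * (16 * t / y ^ 2) := by
          apply mul_le_mul_of_nonneg_left (h1.trans h2) (by positivity)
      _ = (t + x * y) * (16 * t) / y ^ 2 := by ring
      _ ≤ 16 * (x + s) ^ 2 := by
          rw [div_le_iff₀ (by positivity), ← hst]
          have hA : (0:ℝ) ≤ s ^ 2 * (y ^ 2 - 4 * s ^ 2) :=
            mul_nonneg (sq_nonneg s) (by nlinarith)
          have hB : (0:ℝ) ≤ s ^ 2 * (y * (y - 2 * (x + s))) :=
            mul_nonneg (sq_nonneg s) (mul_nonneg hy.le (by linarith))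
          have hC : (0:ℝ) ≤ ((x + s) ^ 2 - s ^ 2) * y ^ 2 :=
            mul_nonneg (by nlinarith) (sq_nonneg y)
          nlinarith [hA, hB, hC, mul_nonneg (sq_nonneg s) (sq_nonneg y),
            mul_nonneg (mul_nonneg (mul_nonneg hs.le hs.le) hs.le) hy.le]

lemma key_upper (x y t s : ℝ) (hx : 0 < x) (hy : 0 < y) (ht : 0 < t) (hs : 0 < s)
    (hst : s ^ 2 = t) :
    Real.exp (-(x - y) ^ 2 / (8 * t)) * (1 - Real.exp (-(x * y) / t)) * (x + s) ^ 2
      ≤ 66 * (x * y) := by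
  set e8 := Real.exp (-(x - y) ^ 2 / (8 * t)) with he8
  set G := 1 - Real.exp (-(x * y) / t) with hG
  have hxy : 0 < x * y := mul_pos hx hy
  have hG1 : G ≤ x * y / t := by
    have h := Real.add_one_le_exp (-(x * y / t))
    rw [hG, neg_div]
    linarith
  have hGnn : 0 ≤ G := by
    have : Real.exp (-(x * y) / t) ≤ 1 := Real.exp_le_one_iff.2
      (div_nonpos_of_nonpos_of_nonneg (by linarith) ht.le)
    rw [hG]; linarith
  have hG2 : G ≤ 1 := by
    have := Real.exp_pos (-(x * y) / t)
    rw [hG]; linarith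
  have he8nn : 0 ≤ e8 := (Real.exp_pos _).le
  have he8le1 : e8 ≤ 1 := Real.exp_le_one_iff.2
    (div_nonpos_of_nonpos_of_nonneg (neg_nonpos.2 (sq_nonneg _)) (by linarith))
  have hX : e8 * G * (2 * x ^ 2) ≤ 64 * (x * y) := by
    rcases le_or_gt x (2 * y) with hc | hc
    · calc e8 * G * (2 * x ^ 2) ≤ 1 * 1 * (2 * x ^ 2) := by
            apply mul_le_mul_of_nonneg_right _ (by positivity)
            exact mul_le_mul he8le1 hG2 hGnn zero_le_one
        _ ≤ 64 * (x * y) := by nlinarith [mul_pos hx hy]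
    · have h1 : e8 ≤ Real.exp (-(x ^ 2 / (32 * t))) := by
        apply Real.exp_le_exp.2
        rw [neg_div, neg_le_neg_iff, div_le_div_iff₀ (by linarith) (by linarith)]
        nlinarith [mul_nonneg ht.le (mul_nonneg (by linarith : (0:ℝ) ≤ x - 2 * y)
          (by linarith : (0:ℝ) ≤ 3 * x - 2 * y))]
      have h2 : Real.exp (-(x ^ 2 / (32 * t))) ≤ 32 * t / x ^ 2 := by
        calc Real.exp (-(x ^ 2 / (32 * t))) ≤ (x ^ 2 / (32 * t))⁻¹ :=
              exp_neg_le_inv' (by positivity)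
          _ = 32 * t / x ^ 2 := by rw [inv_div]
      calc e8 * G * (2 * x ^ 2) ≤ (32 * t / x ^ 2) * (x * y / t) * (2 * x ^ 2) := by
            apply mul_le_mul_of_nonneg_right _ (by positivity)
            exact mul_le_mul (h1.trans h2) hG1 hGnn (by positivity)
        _ = 64 * (x * y) := by field_simp; ring
  have hS : e8 * G * (2 * t) ≤ 2 * (x * y) := by
    calc e8 * G * (2 * t) ≤ 1 * (x * y / t) * (2 * t) := by
          apply mul_le_mul_of_nonneg_right _ (by linarith)
          exact mul_le_mul he8le1 hG1 hGnn zero_le_one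
      _ = 2 * (x * y) := by field_simp
  calc e8 * G * (x + s) ^ 2 ≤ e8 * G * (2 * x ^ 2 + 2 * t) := by
        apply mul_le_mul_of_nonneg_left _ (mul_nonneg he8nn hGnn)
        nlinarith [sq_nonneg (x - s)]
    _ = e8 * G * (2 * x ^ 2) + e8 * G * (2 * t) := by ring
    _ ≤ 64 * (x * y) + 2 * (x * y) := add_le_add hX hS
    _ = 66 * (x * y) := by ring
lemma aux1 (e s u : ℝ) : e / (64 * (s * u ^ 2)) = (4 * s)⁻¹ * (e / (16 * u ^ 2)) := by
  ring

lemma aux2 (e s u : ℝ) : (3 * s)⁻¹ * (66 * e / u ^ 2) = 22 * (e / (s * u ^ 2)) := by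
  ring

lemma aux3 (e D n : ℝ) (he : 0 ≤ e) (hD : 0 < D) (h : n ≤ 3 * D⁻¹) :
    1000⁻¹ * n * e ≤ e / (64 * D) := by
  rw [div_eq_mul_inv, mul_inv]
  nlinarith [mul_le_mul_of_nonneg_right h he, mul_nonneg (inv_nonneg.2 hD.le) he]

lemma aux4 (e D n : ℝ) (he : 0 ≤ e) (hD : 0 < D) (h : (3 * D)⁻¹ ≤ n) :
    22 * (e / D) ≤ 1000 * n * e := by
  rw [mul_inv] at h
  rw [div_eq_mul_inv]
  nlinarith [mul_le_mul_of_nonneg_right h he, mul_nonneg (inv_nonneg.2 hD.le) he]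
set_option maxHeartbeats 1000000

/-- For the Dirichlet heat kernel `T_t` on `(0,∞)` and the measure `ν` with density `y²`,
one has `ν(B(x,r)) ≍ r (x+r)²` and the two-sided bound
`T_t(x,y)/(xy) ≍ ν(B(x,√t))⁻¹ exp(−(x−y)²/(ct))`. -/
theorem stmt16 (T : ℝ → ℝ → ℝ → ℝ)
    (hT : ∀ t x y, T t x y =
      (4 * π * t) ^ (-(1 : ℝ) / 2) *
        (Real.exp (-(x - y) ^ 2 / (4 * t)) - Real.exp (-(x + y) ^ 2 / (4 * t))))
    (ν : ℝ → ℝ → ℝ)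
    (hν : ∀ x r, ν x r = ∫ y in Set.Ioo (max 0 (x - r)) (x + r), y ^ 2) :
    (∃ C : ℝ, 0 < C ∧ ∀ x r : ℝ, 0 < x → 0 < r →
      C⁻¹ * (r * (x + r) ^ 2) ≤ ν x r ∧ ν x r ≤ C * (r * (x + r) ^ 2)) ∧
    (∃ C c₁ c₂ : ℝ, 0 < C ∧ 0 < c₁ ∧ 0 < c₂ ∧ ∀ x y t : ℝ, 0 < x → 0 < y → 0 < t →
      C⁻¹ * (ν x (Real.sqrt t))⁻¹ * Real.exp (-(x - y) ^ 2 / (c₁ * t)) ≤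
        T t x y / (x * y) ∧
      T t x y / (x * y) ≤
        C * (ν x (Real.sqrt t))⁻¹ * Real.exp (-(x - y) ^ 2 / (c₂ * t))) := by
  constructor
  · exact ⟨3, by norm_num, fun x r hx hr => by rw [hν]; exact nu_bound x r hx hr⟩
  refine ⟨1000, 2, 8, by norm_num, by norm_num, by norm_num, fun x y t hx hy ht => ?_⟩
  have hs : 0 < Real.sqrt t := Real.sqrt_pos.2 ht
  set s := Real.sqrt t with hsdef
  have hst : s ^ 2 = t := Real.sq_sqrt ht.le
  have hxy : 0 < x * y := mul_pos hx hy
  have hxs : 0 < x + s := by linarith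
  rw [hν, hT]
  set N := ∫ y in Set.Ioo (max 0 (x - s)) (x + s), y ^ 2 with hN
  obtain ⟨hN1, hN2⟩ := nu_bound x s hx hs
  have hNpos : 0 < N := lt_of_lt_of_le (by positivity) hN1
  have hTsplit : Real.exp (-(x - y) ^ 2 / (4 * t)) - Real.exp (-(x + y) ^ 2 / (4 * t))
      = Real.exp (-(x - y) ^ 2 / (4 * t)) * (1 - Real.exp (-(x * y) / t)) := by
    rw [mul_sub, mul_one, ← Real.exp_add]
    congr 1
    field_simp
    ring
  rw [hTsplit]
  have hpit : 0 < 4 * π * t := by positivity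
  have hA : (4 * π * t) ^ (-(1 : ℝ) / 2) = (Real.sqrt (4 * π * t))⁻¹ := by
    rw [show (-(1 : ℝ) / 2) = -(1 / 2 : ℝ) by ring, Real.rpow_neg hpit.le,
      Real.sqrt_eq_rpow]
  have hApos : 0 < (4 * π * t) ^ (-(1 : ℝ) / 2) := by
    rw [hA]; positivity
  have hsq16 : Real.sqrt (16 * t) = 4 * s := by
    rw [show (16 : ℝ) * t = (4 * s) ^ 2 by rw [mul_pow, hst]; norm_num]
    exact Real.sqrt_sq (by positivity)
  have hsq9 : Real.sqrt (9 * t) = 3 * s := by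
    rw [show (9 : ℝ) * t = (3 * s) ^ 2 by rw [mul_pow, hst]; norm_num]
    exact Real.sqrt_sq (by positivity)
  have hAub : (4 * π * t) ^ (-(1 : ℝ) / 2) ≤ (3 * s)⁻¹ := by
    rw [hA, ← hsq9]
    apply inv_anti₀ (by rw [hsq9]; positivity)
    exact Real.sqrt_le_sqrt (by nlinarith [Real.pi_gt_three])
  have hAlb : (4 * s)⁻¹ ≤ (4 * π * t) ^ (-(1 : ℝ) / 2) := by
    rw [hA, ← hsq16]
    apply inv_anti₀ (Real.sqrt_pos.2 hpit)
    exact Real.sqrt_le_sqrt (by nlinarith [Real.pi_le_four])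
  set e4 := Real.exp (-(x - y) ^ 2 / (4 * t)) with he4def
  set e8 := Real.exp (-(x - y) ^ 2 / (8 * t)) with he8def
  set e2 := Real.exp (-(x - y) ^ 2 / (2 * t)) with he2def
  set G := 1 - Real.exp (-(x * y) / t) with hGdef
  have hGnn : 0 ≤ G := by
    have : Real.exp (-(x * y) / t) ≤ 1 := Real.exp_le_one_iff.2
      (div_nonpos_of_nonpos_of_nonneg (by linarith) ht.le)
    rw [hGdef]; linarith
  have hG3 : x * y / (t + x * y) ≤ G := by
    have h1 : Real.exp (-(x * y) / t) ≤ t / (t + x * y) := by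
      rw [neg_div, Real.exp_neg]
      have h2 : (t + x * y) / t ≤ Real.exp (x * y / t) := by
        have h3 := Real.add_one_le_exp (x * y / t)
        have he : (t + x * y) / t = x * y / t + 1 := by field_simp; ring
        rw [he]; exact h3
      calc (Real.exp (x * y / t))⁻¹ ≤ ((t + x * y) / t)⁻¹ := inv_anti₀ (by positivity) h2
        _ = t / (t + x * y) := by rw [inv_div]
    have he : x * y / (t + x * y) + t / (t + x * y) = 1 := by field_simp; ring
    rw [hGdef]; linarith
  have he4nn : (0:ℝ) ≤ e4 := (Real.exp_pos _).le
  have he8nn : (0:ℝ) ≤ e8 := (Real.exp_pos _).le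
  have he2nn : (0:ℝ) ≤ e2 := (Real.exp_pos _).le
  constructor
  · -- lower bound
    have hEG : e2 / (16 * (x + s) ^ 2) ≤ e4 * G / (x * y) := by
      rw [div_le_div_iff₀ (by positivity) hxy]
      have hkey := key_lower x y t s hx hy ht hs hst
      have h24 : e2 = e4 * e4 := by
        rw [he2def, he4def, ← Real.exp_add]
        congr 1
        field_simp
        ring
      have hstep : e4 * (x * y) ≤ 16 * (x + s) ^ 2 * (x * y / (t + x * y)) := by
        rw [mul_div_assoc', le_div_iff₀ (by positivity)]
        nlinarith [mul_le_mul_of_nonneg_right hkey hxy.le]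
      calc e2 * (x * y) = e4 * (e4 * (x * y)) := by rw [h24]; ring
        _ ≤ e4 * (16 * (x + s) ^ 2 * (x * y / (t + x * y))) :=
            mul_le_mul_of_nonneg_left hstep he4nn
        _ ≤ e4 * (16 * (x + s) ^ 2 * G) := by
            apply mul_le_mul_of_nonneg_left _ he4nn
            exact mul_le_mul_of_nonneg_left hG3 (by positivity)
        _ = e4 * G * (16 * (x + s) ^ 2) := by ring
    have main : e2 / (64 * (s * (x + s) ^ 2)) ≤
        (4 * π * t) ^ (-(1 : ℝ) / 2) * (e4 * G) / (x * y) := by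
      rw [mul_div_assoc]
      calc e2 / (64 * (s * (x + s) ^ 2)) = (4 * s)⁻¹ * (e2 / (16 * (x + s) ^ 2)) :=
            aux1 e2 s (x + s)
        _ ≤ (4 * π * t) ^ (-(1 : ℝ) / 2) * (e4 * G / (x * y)) :=
            mul_le_mul hAlb hEG (by positivity) hApos.le
    have hNinv : N⁻¹ ≤ 3 * (s * (x + s) ^ 2)⁻¹ := by
      have h := inv_anti₀ (show (0:ℝ) < 3⁻¹ * (s * (x + s) ^ 2) by positivity) hN1
      rwa [mul_inv, inv_inv] at h
    calc 1000⁻¹ * N⁻¹ * e2 ≤ e2 / (64 * (s * (x + s) ^ 2)) :=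
          aux3 e2 (s * (x + s) ^ 2) N⁻¹ he2nn (by positivity) hNinv
      _ ≤ _ := main
  · -- upper bound
    have hUG : e4 * G / (x * y) ≤ 66 * e8 / (x + s) ^ 2 := by
      rw [div_le_div_iff₀ hxy (by positivity)]
      have hkeyU := key_upper x y t s hx hy ht hs hst
      have h48 : e4 = e8 * e8 := by
        rw [he4def, he8def, ← Real.exp_add]
        congr 1
        field_simp
        ring
      calc e4 * G * (x + s) ^ 2 = e8 * (e8 * G * (x + s) ^ 2) := by rw [h48]; ring
        _ ≤ e8 * (66 * (x * y)) := mul_le_mul_of_nonneg_left hkeyU he8nn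
        _ = 66 * e8 * (x * y) := by ring
    have hNinv2 : (3 * (s * (x + s) ^ 2))⁻¹ ≤ N⁻¹ := inv_anti₀ hNpos hN2
    have hquotnn : 0 ≤ e4 * G / (x * y) := div_nonneg (mul_nonneg he4nn hGnn) hxy.le
    calc (4 * π * t) ^ (-(1 : ℝ) / 2) * (e4 * G) / (x * y)
        = (4 * π * t) ^ (-(1 : ℝ) / 2) * (e4 * G / (x * y)) := by rw [mul_div_assoc]
      _ ≤ (3 * s)⁻¹ * (66 * e8 / (x + s) ^ 2) :=
          mul_le_mul hAub hUG hquotnn (by positivity)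
      _ = 22 * (e8 / (s * (x + s) ^ 2)) := aux2 e8 s (x + s)
      _ ≤ 1000 * N⁻¹ * e8 :=
          aux4 e8 (s * (x + s) ^ 2) N⁻¹ he8nn (by positivity) hNinv2
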